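/- Let q and r be distributions over [n], let α ∈ [0,1], let ε ≥ 0, and let p = (1−α)q + αr. Let D ⊆ [n] be nonempty and suppose: q(x) > 0 for all x ∈ D, q(y) ≤ (1+ε)·q(x) for all x, y ∈ D, r is constant on D, and p(D) > 0. Then the restriction p_{|D} satisfies |p_{|D}(x) − 1/|D|| ≤ ε/|D| for every x ∈ D; consequently ∑_{x∈D} |p_{|D}(x) − 1/|D|| ≤ ε and (∑_{x∈D} (p_{|D}(x) − 1/|D|)²)^{1/2} ≤ ε/√|D|. -/

import Mathlib

open Finset

/-- A distribution over `[n]`: nonnegative values summing to 1. -/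
def IsDist {n : ℕ} (p : Fin n → ℝ) : Prop :=
  (∀ i, 0 ≤ p i) ∧ ∑ i, p i = 1

/-- If `p = (1−α)q + αr`, `q` is positive and nearly-constant (within a
`(1+ε)` factor) on a nonempty set `D`, `r` is constant on `D`, and `p(D) > 0`, then
the restriction of `p` to `D` is pointwise within `ε/|D|` of uniform; hence its ℓ₁-
(resp. ℓ₂-) distance to the uniform distribution on `D` is at most `ε`
(resp. `ε/√|D|`). -/
theorem stmt14 {n : ℕ} (q r p : Fin n → ℝ)
    (hq : IsDist q) (hr : IsDist r)
    (α ε : ℝ) (hα0 : 0 ≤ α) (hα1 : α ≤ 1) (hε : 0 ≤ ε)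
    (hp : ∀ i, p i = (1 - α) * q i + α * r i)
    (D : Finset (Fin n)) (hD : D.Nonempty)
    (hqpos : ∀ x ∈ D, 0 < q x)
    (hqratio : ∀ x ∈ D, ∀ y ∈ D, q y ≤ (1 + ε) * q x)
    (hrconst : ∀ x ∈ D, ∀ y ∈ D, r x = r y)
    (hpD : 0 < ∑ x ∈ D, p x) :
    (∀ x ∈ D, |p x / (∑ y ∈ D, p y) - 1 / D.card| ≤ ε / D.card) ∧
      (∑ x ∈ D, |p x / (∑ y ∈ D, p y) - 1 / D.card|) ≤ ε ∧
      Real.sqrt (∑ x ∈ D, (p x / (∑ y ∈ D, p y) - 1 / D.card) ^ 2)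
        ≤ ε / Real.sqrt D.card := by
  have hcard : (0:ℝ) < D.card := by exact_mod_cast Finset.card_pos.mpr hD
  set S := ∑ y ∈ D, p y with hS
  -- pointwise comparability of p on D
  have hpt : ∀ x ∈ D, ∀ y ∈ D, p x ≤ (1 + ε) * p y := by
    intro x hx y hy
    have h1 : q x ≤ (1 + ε) * q y := hqratio y hy x hx
    have h2 : r x = r y := hrconst x hx y hy
    have h3 : 0 ≤ r y := hr.1 y
    rw [hp x, hp y, h2]
    nlinarith [mul_nonneg hα0 h3, mul_nonneg hε (mul_nonneg hα0 h3),
      mul_nonneg (sub_nonneg.mpr hα1) (hqpos y hy).le]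
  have hppos : ∀ x ∈ D, 0 ≤ p x := by
    intro x hx
    rw [hp x]
    nlinarith [hq.1 x, hr.1 x]
  -- key abs bound
  have key : ∀ x ∈ D, |p x / S - 1 / D.card| ≤ ε / D.card := by
    intro x hx
    have hA : (D.card : ℝ) * p x ≤ (1 + ε) * S := by
      calc (D.card : ℝ) * p x = ∑ _y ∈ D, p x := by rw [Finset.sum_const, nsmul_eq_mul]
        _ ≤ ∑ y ∈ D, (1 + ε) * p y := Finset.sum_le_sum fun y hy => hpt x hx y hy
        _ = (1 + ε) * S := by rw [← Finset.mul_sum]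
    have hB : S ≤ (1 + ε) * ((D.card : ℝ) * p x) := by
      calc S ≤ ∑ _y ∈ D, (1 + ε) * p x := Finset.sum_le_sum fun y hy => hpt y hy x hx
        _ = (1 + ε) * ((D.card : ℝ) * p x) := by
            rw [Finset.sum_const, nsmul_eq_mul]; ring
    have habs : |(D.card : ℝ) * p x - S| ≤ ε * S := by
      rw [abs_le]
      constructor
      · nlinarith [hppos x hx, mul_nonneg hε (mul_nonneg hε hpD.le)]
      · linarith
    have heq : p x / S - 1 / D.card = ((D.card : ℝ) * p x - S) / ((D.card : ℝ) * S) := by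
      field_simp
    rw [heq, abs_div, abs_of_pos (mul_pos hcard hpD), div_le_div_iff₀ (mul_pos hcard hpD) hcard]
    nlinarith [habs, hcard]
  refine ⟨key, ?_, ?_⟩
  · calc (∑ x ∈ D, |p x / S - 1 / D.card|) ≤ ∑ _x ∈ D, ε / D.card :=
          Finset.sum_le_sum fun x hx => key x hx
      _ = (D.card : ℝ) * (ε / D.card) := by rw [Finset.sum_const, nsmul_eq_mul]
      _ = ε := by field_simp
  · have hsum : (∑ x ∈ D, (p x / S - 1 / D.card) ^ 2) ≤ (D.card : ℝ) * (ε / D.card) ^ 2 := by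
      calc (∑ x ∈ D, (p x / S - 1 / D.card) ^ 2) ≤ ∑ _x ∈ D, (ε / D.card) ^ 2 := by
            refine Finset.sum_le_sum fun x hx => ?_
            have h := key x hx
            rw [abs_le] at h
            nlinarith [h.1, h.2]
        _ = (D.card : ℝ) * (ε / D.card) ^ 2 := by rw [Finset.sum_const, nsmul_eq_mul]
    calc Real.sqrt (∑ x ∈ D, (p x / S - 1 / D.card) ^ 2)
        ≤ Real.sqrt ((D.card : ℝ) * (ε / D.card) ^ 2) := Real.sqrt_le_sqrt hsum
      _ = ε / Real.sqrt D.card := by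
          rw [show (D.card : ℝ) * (ε / D.card) ^ 2 = ε ^ 2 / D.card by field_simp,
            Real.sqrt_div (sq_nonneg ε), Real.sqrt_sq hε]
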